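/- For a closed polygonal line in ℝ^n with m ≥ 3 vertices, the sum of interior angles is at most (m-2)·180°, with equality when the polygon is planar and convex. -/

import Mathlib

section AngleTriangle

open InnerProductGeometry Real

variable {V : Type*} [NormedAddCommGroup V] [InnerProductSpace ℝ V]

local notation "⟪" x ", " y "⟫" => @inner ℝ V _ x y

lemma angle_triangle_unit {x y z : V} (hx : ‖x‖ = 1) (hy : ‖y‖ = 1) (hz : ‖z‖ = 1) :
    angle x z ≤ angle x y + angle y z := by
  by_cases hab : π ≤ angle x y + angle y z
  · exact le_trans (angle_le_pi x z) hab
  push_neg at hab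
  have ha0 := angle_nonneg x y
  have hb0 := angle_nonneg y z
  have hc0 := angle_nonneg x z
  have hcπ := angle_le_pi x z
  have cosa : Real.cos (angle x y) = ⟪x, y⟫ := by rw [cos_angle, hx, hy]; ring_nf
  have cosb : Real.cos (angle y z) = ⟪y, z⟫ := by rw [cos_angle, hy, hz]; ring_nf
  have cosc : Real.cos (angle x z) = ⟪x, z⟫ := by rw [cos_angle, hx, hz]; ring_nf
  set x' := x - ⟪x, y⟫ • y with hx'
  set z' := z - ⟪y, z⟫ • y with hz'
  have hx'2 : ‖x'‖ ^ 2 = 1 - ⟪x, y⟫ ^ 2 := by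
    rw [hx', norm_sub_sq_real, real_inner_smul_right, norm_smul, hy, hx]
    simp [Real.norm_eq_abs, sq_abs]; ring
  have hz'2 : ‖z'‖ ^ 2 = 1 - ⟪y, z⟫ ^ 2 := by
    rw [hz', norm_sub_sq_real, real_inner_smul_right, norm_smul, hy, hz,
      real_inner_comm z y]
    simp [Real.norm_eq_abs, sq_abs]; ring
  have hsina : Real.sin (angle x y) = ‖x'‖ := by
    have h1 : Real.sin (angle x y) ^ 2 = ‖x'‖ ^ 2 := by
      rw [Real.sin_sq, cosa, hx'2]
    have h2 : 0 ≤ Real.sin (angle x y) := Real.sin_nonneg_of_nonneg_of_le_pi ha0 (angle_le_pi x y)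
    calc Real.sin (angle x y) = √(Real.sin (angle x y) ^ 2) := (Real.sqrt_sq h2).symm
      _ = √(‖x'‖ ^ 2) := by rw [h1]
      _ = ‖x'‖ := Real.sqrt_sq (norm_nonneg _)
  have hsinb : Real.sin (angle y z) = ‖z'‖ := by
    have h1 : Real.sin (angle y z) ^ 2 = ‖z'‖ ^ 2 := by
      rw [Real.sin_sq, cosb, hz'2]
    have h2 : 0 ≤ Real.sin (angle y z) := Real.sin_nonneg_of_nonneg_of_le_pi hb0 (angle_le_pi y z)
    calc Real.sin (angle y z) = √(Real.sin (angle y z) ^ 2) := (Real.sqrt_sq h2).symm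
      _ = √(‖z'‖ ^ 2) := by rw [h1]
      _ = ‖z'‖ := Real.sqrt_sq (norm_nonneg _)
  have hinner : ⟪x', z'⟫ = ⟪x, z⟫ - ⟪x, y⟫ * ⟪y, z⟫ := by
    have hyy : ⟪y, y⟫ = 1 := by
      rw [real_inner_self_eq_norm_sq, hy]; norm_num
    rw [hx', hz']
    simp only [inner_sub_left, inner_sub_right, real_inner_smul_left, real_inner_smul_right,
      hyy, real_inner_comm y x, real_inner_comm z y]
    ring
  have hcs := abs_real_inner_le_norm x' z'
  have key : Real.cos (angle x y + angle y z) ≤ Real.cos (angle x z) := by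
    rw [Real.cos_add, cosa, cosb, cosc, hsina, hsinb]
    have h3 : -(‖x'‖ * ‖z'‖) ≤ ⟪x', z'⟫ := neg_le_of_abs_le hcs
    linarith [hinner]
  by_contra hlt
  push_neg at hlt
  have := Real.cos_lt_cos_of_nonneg_of_le_pi (by positivity) hcπ hlt
  linarith

lemma angle_triangle' (x y z : V) : angle x z ≤ angle x y + angle y z := by
  rcases eq_or_ne x 0 with rfl | hx
  · rw [angle_zero_left, angle_zero_left]
    linarith [angle_nonneg y z]
  rcases eq_or_ne y 0 with rfl | hy
  · rw [angle_zero_right, angle_zero_left]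
    linarith [angle_le_pi x z]
  rcases eq_or_ne z 0 with rfl | hz
  · rw [angle_zero_right, angle_zero_right]
    linarith [angle_nonneg x y]
  have hx1 : (0:ℝ) < ‖x‖⁻¹ := inv_pos.mpr (norm_pos_iff.mpr hx)
  have hy1 : (0:ℝ) < ‖y‖⁻¹ := inv_pos.mpr (norm_pos_iff.mpr hy)
  have hz1 : (0:ℝ) < ‖z‖⁻¹ := inv_pos.mpr (norm_pos_iff.mpr hz)
  have hu : ∀ w : V, w ≠ 0 → ‖‖w‖⁻¹ • w‖ = 1 := fun w hw => by
    rw [norm_smul, norm_inv, norm_norm, inv_mul_cancel₀ (norm_ne_zero_iff.mpr hw)]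
  have h := angle_triangle_unit (x := ‖x‖⁻¹ • x) (y := ‖y‖⁻¹ • y) (z := ‖z‖⁻¹ • z)
    (hu x hx) (hu y hy) (hu z hz)
  rwa [angle_smul_left_of_pos _ _ hx1, angle_smul_right_of_pos _ _ hz1,
    angle_smul_left_of_pos _ _ hx1, angle_smul_right_of_pos _ _ hy1,
    angle_smul_left_of_pos _ _ hy1, angle_smul_right_of_pos _ _ hz1] at h

lemma point_angle_triangle {P : Type*} [MetricSpace P] [NormedAddTorsor V P]
    (a p b c : P) : EuclideanGeometry.angle a p c ≤
      EuclideanGeometry.angle a p b + EuclideanGeometry.angle b p c :=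
  angle_triangle' (a -ᵥ p) (b -ᵥ p) (c -ᵥ p)

end AngleTriangle

section Key

open EuclideanGeometry Real



set_option maxHeartbeats 1000000 in
lemma polygon_key {V : Type*} [NormedAddCommGroup V] [InnerProductSpace ℝ V] :
    ∀ m : ℕ, 3 ≤ m → ∀ v : ℤ → V, (∀ i : ℤ, v (i + m) = v i) →
      (∀ i : ℤ, v i ≠ v (i + 1)) →
      (∑ i ∈ Finset.range m, ∠ (v ((i : ℤ) - 1)) (v i) (v ((i : ℤ) + 1)))
        ≤ ((m : ℝ) - 2) * π := by
  intro m
  induction m using Nat.strong_induction_on with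
  | _ m IH =>
  intro hm v hper hdist
  by_cases hm3 : m = 3
  · subst hm3
    have e1 : v (-1) = v 2 := by have h := hper (-1); norm_num at h; exact h.symm
    have e2 : v 3 = v 0 := by have h := hper 0; norm_num at h; exact h
    have h01 : v 0 ≠ v 1 := by have h := hdist 0; norm_num at h; exact h
    have h12 : v 1 ≠ v 2 := by have h := hdist 1; norm_num at h; exact h
    have h20 : v 2 ≠ v 0 := by have h := hdist 2; norm_num at h; rwa [e2] at h
    have htri := EuclideanGeometry.angle_add_angle_add_angle_eq_pi (p₁ := v 2) (p₂ := v 0)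
      (v 1) (Ne.symm h20)
    rw [Finset.sum_range_succ, Finset.sum_range_succ, Finset.sum_range_succ,
      Finset.sum_range_zero]
    norm_num [e1, e2]
    linarith [htri]
  -- now m ≥ 4
  obtain ⟨t, rfl⟩ : ∃ t, m = t + 4 := ⟨m - 4, by omega⟩
  clear hm hm3
  set f : ℕ → ℝ := fun i => ∠ (v ((i : ℤ) - 1)) (v i) (v ((i : ℤ) + 1)) with hfdef
  have hf : ∀ i : ℕ, f i = ∠ (v ((i : ℤ) - 1)) (v i) (v ((i : ℤ) + 1)) := fun i => rfl
  have hsum : ∑ i ∈ Finset.range (t + 4), f i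
      = (∑ i ∈ Finset.range (t + 1), f (i + 1)) + f 0 + f (t + 2) + f (t + 3) := by
    rw [Finset.sum_range_succ, Finset.sum_range_succ, Finset.sum_range_succ']
  have hvm : v (-1) = v ((t : ℤ) + 3) := by
    have h := hper (-1)
    rw [show (-1 + ((t + 4 : ℕ) : ℤ)) = (t : ℤ) + 3 by push_cast; ring] at h
    exact h.symm
  have hv0 : v ((t : ℤ) + 4) = v 0 := by
    have h := hper 0
    rwa [show ((0 : ℤ) + ((t + 4 : ℕ) : ℤ)) = (t : ℤ) + 4 by push_cast; ring] at h
  have f0 : f 0 = ∠ (v ((t : ℤ) + 3)) (v 0) (v 1) := by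
    rw [hf, ← hvm]; norm_num
  have ft2 : f (t + 2) = ∠ (v ((t : ℤ) + 1)) (v ((t : ℤ) + 2)) (v ((t : ℤ) + 3)) := by
    rw [hf, show (((t + 2 : ℕ) : ℤ)) = (t : ℤ) + 2 by push_cast; ring,
      show ((t : ℤ) + 2 - 1) = (t : ℤ) + 1 by ring,
      show ((t : ℤ) + 2 + 1) = (t : ℤ) + 3 by ring]
  have ft3 : f (t + 3) = ∠ (v ((t : ℤ) + 2)) (v ((t : ℤ) + 3)) (v 0) := by
    rw [hf, show (((t + 3 : ℕ) : ℤ)) = (t : ℤ) + 3 by push_cast; ring,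
      show ((t : ℤ) + 3 - 1) = (t : ℤ) + 2 by ring,
      show ((t : ℤ) + 3 + 1) = (t : ℤ) + 4 by ring, hv0]
  have hAngleNonneg : ∀ a b c : V, 0 ≤ ∠ a b c := fun a b c => EuclideanGeometry.angle_nonneg a b c
  have hAngleLePi : ∀ a b c : V, ∠ a b c ≤ π := fun a b c => EuclideanGeometry.angle_le_pi a b c
  by_cases h0 : v ((t : ℤ) + 2) = v 0
  · rcases Nat.eq_zero_or_pos t with rfl | htpos
    · -- m = 4, degenerate quadrilateral
      have f1 : f 1 = 0 := by
        rw [hf, show ((1 : ℕ) : ℤ) - 1 = 0 by norm_num, show ((1 : ℕ) : ℤ) + 1 = 2 by norm_num,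
          show ((2 : ℤ)) = (0 : ℤ) + 2 by norm_num]
        rw [show v ((0 : ℤ) + 2) = v 0 from h0]
        exact EuclideanGeometry.angle_self_of_ne (hdist 0)
      have f3 : f (0 + 3) = 0 := by
        rw [ft3]
        rw [show v ((0 : ℕ) + (2 : ℤ)) = v 0 from h0]
        have h := hdist ((0 : ℕ) + (3 : ℤ))
        rw [show ((0 : ℕ) + (3 : ℤ)) + 1 = (0 : ℕ) + (4 : ℤ) by ring, hv0] at h
        exact EuclideanGeometry.angle_self_of_ne (Ne.symm h)
      have e1 : ∑ i ∈ Finset.range (0 + 1), f (i + 1) = f 1 := by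
        simp
      have hb0 : f 0 ≤ π := by rw [hf]; exact hAngleLePi _ _ _
      have hb2 : f (0 + 2) ≤ π := by rw [hf]; exact hAngleLePi _ _ _
      rw [hsum, e1, f1, f3]
      push_cast
      linarith [hb0, hb2]
    · -- t ≥ 1 : cut off the two vertices v (t+2) = v 0 and v (t+3)
      obtain ⟨s, rfl⟩ : ∃ s, t = s + 1 := ⟨t - 1, by omega⟩
      set k : ℤ := (s : ℤ) + 3 with hk
      clear_value k
      have hkpos : (0 : ℤ) < k := by omega
      set w : ℤ → V := fun i => v (i % k) with hw
      have hwv : ∀ i : ℤ, 0 ≤ i → i < k → w i = v i := fun i h1 h2 => by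
        simp only [hw]; rw [Int.emod_eq_of_lt h1 h2]
      have hperw : ∀ i : ℤ, w (i + ((s + 3 : ℕ) : ℤ)) = w i := by
        intro i
        simp only [hw]
        rw [show (((s + 3 : ℕ) : ℤ)) = k by push_cast; omega,
          show i + k = i + k * 1 by ring, Int.add_mul_emod_self_left]
      have h0' : v k = v 0 := by
        rw [show k = ((s : ℕ) + 1 : ℤ) + 2 by push_cast; omega]
        exact_mod_cast h0
      have hdistw : ∀ i : ℤ, w i ≠ w (i + 1) := by
        intro i
        simp only [hw]
        have hr0 : 0 ≤ i % k := Int.emod_nonneg i (by omega)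
        have hrlt : i % k < k := Int.emod_lt_of_pos i hkpos
        have h1 : (i + 1) % k = (i % k + 1) % k := by
          conv_lhs => rw [← Int.emod_add_mul_ediv i k]
          rw [show i % k + k * (i / k) + 1 = i % k + 1 + k * (i / k) by ring,
            Int.add_mul_emod_self_left]
        rw [h1]
        by_cases hc : i % k = (s : ℤ) + 2
        · rw [hc, show ((s : ℤ) + 2 + 1) = k by omega, Int.emod_self]
          intro hcon
          exact hdist ((s : ℤ) + 2) (by rw [hcon, show (s : ℤ) + 2 + 1 = k by omega, h0'])
        · have h2 : (i % k + 1) % k = i % k + 1 :=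
            Int.emod_eq_of_lt (by omega) (by omega)
          rw [h2]
          exact hdist _
      set g : ℕ → ℝ := fun i => ∠ (w ((i : ℤ) - 1)) (w i) (w ((i : ℤ) + 1)) with hgdef
      have hg : ∀ i : ℕ, g i = ∠ (w ((i : ℤ) - 1)) (w i) (w ((i : ℤ) + 1)) := fun i => rfl
      have hIH := IH (s + 3) (by omega) (by omega) w hperw hdistw
      have hsum' : ∑ i ∈ Finset.range (s + 3), g i
          = (∑ i ∈ Finset.range (s + 1), g (i + 1)) + g 0 + g (s + 2) := by
        rw [Finset.sum_range_succ, Finset.sum_range_succ']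
      have hmid : ∑ i ∈ Finset.range (s + 1), g (i + 1)
          = ∑ i ∈ Finset.range (s + 1), f (i + 1) := by
        refine Finset.sum_congr rfl fun i hi => ?_
        rw [Finset.mem_range] at hi
        rw [hg, hf, show ((i + 1 : ℕ) : ℤ) - 1 = (i : ℤ) by push_cast; ring,
          hwv (i : ℤ) (by positivity) (by omega),
          hwv ((i + 1 : ℕ) : ℤ) (by positivity) (by push_cast; omega),
          hwv (((i + 1 : ℕ) : ℤ) + 1) (by positivity) (by push_cast; omega)]
      have wk : w k = v 0 := by simp only [hw]; rw [Int.emod_self]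
      have gs2 : g (s + 2) = ∠ (v ((s : ℤ) + 1)) (v ((s : ℤ) + 2)) (v 0) := by
        rw [hg, show ((s + 2 : ℕ) : ℤ) = (s : ℤ) + 2 by push_cast; ring,
          show ((s : ℤ) + 2 - 1) = (s : ℤ) + 1 by ring,
          show ((s : ℤ) + 2 + 1) = k by omega,
          hwv ((s : ℤ) + 1) (by positivity) (by omega),
          hwv ((s : ℤ) + 2) (by positivity) (by omega), wk]
      have fs2 : f (s + 2) = ∠ (v ((s : ℤ) + 1)) (v ((s : ℤ) + 2)) (v 0) := by
        rw [hf, show ((s + 2 : ℕ) : ℤ) = (s : ℤ) + 2 by push_cast; ring,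
          show ((s : ℤ) + 2 - 1) = (s : ℤ) + 1 by ring,
          show ((s : ℤ) + 2 + 1) = k by omega, h0']
      -- f (t+3) = f (s+4) = 0
      have ft3' : f (s + 1 + 3) = 0 := by
        rw [ft3]
        rw [show (((s + 1 : ℕ) : ℤ) + 2) = k by push_cast; omega, h0']
        have h := hdist (((s + 1 : ℕ) : ℤ) + 3)
        rw [show (((s + 1 : ℕ) : ℤ) + 3) + 1 = ((s + 1 : ℕ) : ℤ) + 4 by ring, hv0] at h
        exact EuclideanGeometry.angle_self_of_ne (Ne.symm h)
      -- rewrite goal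
      have hmid2 : ∑ i ∈ Finset.range (s + 1 + 1), f (i + 1)
          = (∑ i ∈ Finset.range (s + 1), f (i + 1)) + f (s + 2) := by
        rw [Finset.sum_range_succ]
      rw [hsum, hmid2, ft3', fs2]
      rw [hsum', hmid, gs2] at hIH
      have hg0 : 0 ≤ g 0 := by rw [hg]; exact hAngleNonneg _ _ _
      have hb1 : f 0 ≤ π := by rw [hf]; exact hAngleLePi _ _ _
      have hb2 : f (s + 1 + 2) ≤ π := by rw [hf]; exact hAngleLePi _ _ _
      push_cast at hIH ⊢
      linarith [hIH, hg0, hb1, hb2]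
  · -- Case A : cut off the vertex v (t+3)
    set k : ℤ := (t : ℤ) + 3 with hk
    clear_value k
    have hkpos : (0 : ℤ) < k := by omega
    set w : ℤ → V := fun i => v (i % k) with hw
    have hwv : ∀ i : ℤ, 0 ≤ i → i < k → w i = v i := fun i h1 h2 => by
      simp only [hw]; rw [Int.emod_eq_of_lt h1 h2]
    have hperw : ∀ i : ℤ, w (i + ((t + 3 : ℕ) : ℤ)) = w i := by
      intro i
      simp only [hw]
      rw [show (((t + 3 : ℕ) : ℤ)) = k by push_cast; omega, show i + k = i + k * 1 by ring, Int.add_mul_emod_self_left]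
    have hdistw : ∀ i : ℤ, w i ≠ w (i + 1) := by
      intro i
      simp only [hw]
      have hr0 : 0 ≤ i % k := Int.emod_nonneg i (by omega)
      have hrlt : i % k < k := Int.emod_lt_of_pos i hkpos
      have h1 : (i + 1) % k = (i % k + 1) % k := by
        conv_lhs => rw [← Int.emod_add_mul_ediv i k]
        rw [show i % k + k * (i / k) + 1 = i % k + 1 + k * (i / k) by ring,
          Int.add_mul_emod_self_left]
      rw [h1]
      by_cases hc : i % k = (t : ℤ) + 2
      · rw [hc, show ((t : ℤ) + 2 + 1) = k by omega, Int.emod_self]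
        exact h0
      · have h2 : (i % k + 1) % k = i % k + 1 :=
          Int.emod_eq_of_lt (by omega) (by omega)
        rw [h2]
        exact hdist _
    set g : ℕ → ℝ := fun i => ∠ (w ((i : ℤ) - 1)) (w i) (w ((i : ℤ) + 1)) with hgdef
    have hg : ∀ i : ℕ, g i = ∠ (w ((i : ℤ) - 1)) (w i) (w ((i : ℤ) + 1)) := fun i => rfl
    have hIH := IH (t + 3) (by omega) (by omega) w hperw hdistw
    have hsum' : ∑ i ∈ Finset.range (t + 3), g i
        = (∑ i ∈ Finset.range (t + 1), g (i + 1)) + g 0 + g (t + 2) := by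
      rw [Finset.sum_range_succ, Finset.sum_range_succ']
    have hmid : ∑ i ∈ Finset.range (t + 1), g (i + 1) = ∑ i ∈ Finset.range (t + 1), f (i + 1) := by
      refine Finset.sum_congr rfl fun i hi => ?_
      rw [Finset.mem_range] at hi
      rw [hg, hf, show ((i + 1 : ℕ) : ℤ) - 1 = (i : ℤ) by push_cast; ring,
        hwv (i : ℤ) (by positivity) (by omega),
        hwv ((i + 1 : ℕ) : ℤ) (by positivity) (by push_cast; omega),
        hwv (((i + 1 : ℕ) : ℤ) + 1) (by positivity) (by push_cast; omega)]
    have hneg1 : (-1 : ℤ) % k = (t : ℤ) + 2 := by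
      have h := Int.add_mul_emod_self_left (a := -1) (b := k) (c := 1)
      rw [mul_one] at h
      rw [← h, show (-1 : ℤ) + k = (t : ℤ) + 2 by omega]
      exact Int.emod_eq_of_lt (by omega) (by omega)
    have wm1 : w (-1) = v ((t : ℤ) + 2) := by simp only [hw]; rw [hneg1]
    have w0 : w 0 = v 0 := hwv 0 le_rfl hkpos
    have w1 : w 1 = v 1 := hwv 1 (by norm_num) (by omega)
    have wk : w k = v 0 := by simp only [hw]; rw [Int.emod_self]
    have g0 : g 0 = ∠ (v ((t : ℤ) + 2)) (v 0) (v 1) := by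
      rw [hg]
      norm_num
      rw [wm1, w0, w1]
    have gt2 : g (t + 2) = ∠ (v ((t : ℤ) + 1)) (v ((t : ℤ) + 2)) (v 0) := by
      rw [hg, show ((t + 2 : ℕ) : ℤ) = (t : ℤ) + 2 by push_cast; ring,
        show ((t : ℤ) + 2 - 1) = (t : ℤ) + 1 by ring,
        show ((t : ℤ) + 2 + 1) = k by omega,
        hwv ((t : ℤ) + 1) (by positivity) (by omega),
        hwv ((t : ℤ) + 2) (by positivity) (by omega), wk]
    have ineq1 : ∠ (v k) (v 0) (v 1)
        ≤ ∠ (v k) (v 0) (v ((t : ℤ) + 2)) + ∠ (v ((t : ℤ) + 2)) (v 0) (v 1) :=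
      point_angle_triangle _ _ _ _
    have ineq2 : ∠ (v ((t : ℤ) + 1)) (v ((t : ℤ) + 2)) (v k)
        ≤ ∠ (v ((t : ℤ) + 1)) (v ((t : ℤ) + 2)) (v 0) + ∠ (v 0) (v ((t : ℤ) + 2)) (v k) :=
      point_angle_triangle _ _ _ _
    have hA : v k ≠ v 0 := by
      have h := hdist k
      rwa [show k + 1 = (t : ℤ) + 4 by omega, hv0] at h
    have hB : v ((t : ℤ) + 2) ≠ v k := by
      have h := hdist ((t : ℤ) + 2)
      rwa [show (t : ℤ) + 2 + 1 = k by omega] at h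
    have htri : ∠ (v k) (v 0) (v ((t : ℤ) + 2)) + ∠ (v 0) (v ((t : ℤ) + 2)) (v k)
        + ∠ (v ((t : ℤ) + 2)) (v k) (v 0) = π :=
      EuclideanGeometry.angle_add_angle_add_angle_eq_pi (v ((t : ℤ) + 2)) (Ne.symm hA)
    rw [hsum, f0, ft2, ft3]
    rw [hsum', hmid, g0, gt2] at hIH
    push_cast at hIH ⊢
    linarith [hIH, ineq1, ineq2, htri]


end Key


open EuclideanGeometry Real in
/-- Fenchel-type bound for closed polygonal lines: the sum of the interior angles of a
closed polygonal line with `m ≥ 3` vertices in `ℝ^n` (consecutive vertices distinct) is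
at most `(m-2)·180°`, i.e. `(m-2)·π`. -/
theorem polygon_angle_sum_le {n m : ℕ} [NeZero m] (hm : 3 ≤ m)
    (v : Fin m → EuclideanSpace ℝ (Fin n))
    (hdist : ∀ j : Fin m, v j ≠ v (j + 1)) :
    (∑ j : Fin m, EuclideanGeometry.angle (v (j - 1)) (v j) (v (j + 1)))
      ≤ ((m : ℝ) - 2) * Real.pi := by
  have hm0 : 0 < m := by omega
  have hmZ : (0 : ℤ) < (m : ℤ) := by exact_mod_cast hm0
  have hmem : ∀ i : ℤ, (i % (m : ℤ)).toNat < m := by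
    intro i
    have h1 : 0 ≤ i % (m : ℤ) := Int.emod_nonneg i (by omega)
    have h2 : i % (m : ℤ) < m := Int.emod_lt_of_pos i hmZ
    omega
  set u : ℤ → EuclideanSpace ℝ (Fin n) := fun i => v ⟨(i % (m : ℤ)).toNat, hmem i⟩ with hu
  have hnn : ∀ i : ℤ, 0 ≤ i % (m : ℤ) := fun i => Int.emod_nonneg i (by omega)
  have key : ∀ (i : ℤ) (j : Fin m), i % (m : ℤ) = (j.val : ℤ) → u i = v j := by
    intro i j h
    simp only [hu]
    refine congrArg v (Fin.ext ?_)
    show (i % (m : ℤ)).toNat = j.val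
    omega
  have hone : (1 : Fin m).val = 1 := by
    rw [Fin.val_one']; exact Nat.mod_eq_of_lt (by omega)
  have hstep : ∀ i : ℤ, (i + 1) % (m : ℤ) = (i % (m : ℤ) + 1) % (m : ℤ) := by
    intro i
    conv_lhs => rw [← Int.emod_add_mul_ediv i (m : ℤ)]
    rw [show i % (m : ℤ) + (m : ℤ) * (i / (m : ℤ)) + 1
        = i % (m : ℤ) + 1 + (m : ℤ) * (i / (m : ℤ)) by ring, Int.add_mul_emod_self_left]
  have hsucc : ∀ j : Fin m, ((j.val : ℤ) + 1) % (m : ℤ) = (((j + 1 : Fin m)).val : ℤ) := by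
    intro j
    have h1 : ((j + 1 : Fin m)).val = (j.val + 1) % m := by
      rw [Fin.add_def, hone]
    rw [h1]
    push_cast
    rfl
  have hpred : ∀ j : Fin m, ((j.val : ℤ) - 1) % (m : ℤ) = (((j - 1 : Fin m)).val : ℤ) := by
    intro j
    have h1 : ((j - 1 : Fin m)).val = (m - 1 + j.val) % m := by
      rw [Fin.sub_def, hone]
    rw [h1]
    have h2 : ((j.val : ℤ) - 1) % (m : ℤ) = ((j.val : ℤ) + ((m : ℤ) - 1)) % (m : ℤ) := by
      rw [show (j.val : ℤ) + ((m : ℤ) - 1) = ((j.val : ℤ) - 1) + (m : ℤ) * 1 by ring,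
        Int.add_mul_emod_self_left]
    rw [h2]
    push_cast [Nat.cast_sub (show 1 ≤ m by omega)]
    rw [show ((j.val : ℤ) + ((m : ℤ) - 1)) = ((m : ℤ) - 1 + (j.val : ℤ)) by ring]
  have hper : ∀ i : ℤ, u (i + (m : ℤ)) = u i := by
    intro i
    simp only [hu]
    refine congrArg v (Fin.ext ?_)
    show ((i + (m : ℤ)) % (m : ℤ)).toNat = (i % (m : ℤ)).toNat
    rw [show i + (m : ℤ) = i + (m : ℤ) * 1 by ring, Int.add_mul_emod_self_left]
  have hdistu : ∀ i : ℤ, u i ≠ u (i + 1) := by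
    intro i
    set j : Fin m := ⟨(i % (m : ℤ)).toNat, hmem i⟩ with hj
    have hjv : (j.val : ℤ) = i % (m : ℤ) := by
      show (((i % (m : ℤ)).toNat : ℕ) : ℤ) = i % (m : ℤ)
      exact Int.toNat_of_nonneg (hnn i)
    have e1 : u i = v j := key i j hjv.symm
    have e2 : u (i + 1) = v (j + 1) := by
      refine key (i + 1) (j + 1) ?_
      rw [hstep i, ← hjv]
      exact hsucc j
    rw [e1, e2]
    exact hdist j
  have hsum : (∑ j : Fin m, ∠ (v (j - 1)) (v j) (v (j + 1)))
      = ∑ i ∈ Finset.range m, ∠ (u ((i : ℤ) - 1)) (u i) (u ((i : ℤ) + 1)) := by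
    rw [← Fin.sum_univ_eq_sum_range (fun i => ∠ (u ((i : ℤ) - 1)) (u i) (u ((i : ℤ) + 1))) m]
    refine Finset.sum_congr rfl fun j _ => ?_
    have e0 : u ((j.val : ℤ)) = v j := by
      refine key _ j ?_
      exact Int.emod_eq_of_lt (by positivity) (by exact_mod_cast j.isLt)
    have eP : u ((j.val : ℤ) + 1) = v (j + 1) := key _ (j + 1) (hsucc j)
    have eM : u ((j.val : ℤ) - 1) = v (j - 1) := key _ (j - 1) (hpred j)
    rw [e0, eP, eM]
  rw [hsum]
  exact polygon_key m hm u hper hdistu
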